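/- In the universal enveloping algebra of the centerless high rank W-algebra W(2,2), for any α, β, s ∈ ℤᵏ and γ ∈ ℤᵏ∖{0}, the combination [Ω_{α,β−γ}^{(l,γ)}, W_{s+γ}] − 2[Ω_{α,β}^{(l,γ)}, W_s] + [Ω_{α,β+γ}^{(l,γ)}, W_{s−γ}] − [Ω_{α+γ,β−γ}^{(l,γ)}, W_s] + 2[Ω_{α+γ,β}^{(l,γ)}, W_{s−γ}] − [Ω_{α+γ,β+γ}^{(l,γ)}, W_{s−2γ}] equals 2γ · Σ_{i=0}^{l+2} (−1)^i C(l+2,i) W_{α+s−(i−1)γ} L_{β+(i−1)γ}, where Ω_{α,β}^{(l,γ)} = Σ_{i=0}^l (−1)^i C(l,i) L_{α−iγ} L_{β+iγ}. -/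

import Mathlib

/-- The operator `Ω_{α,β}^{(l,γ)} = Σ_{i=0}^l (−1)^i C(l,i) L_{α−iγ} L_{β+iγ}`. -/
noncomputable def Omega {k : ℕ} {M : Type*} [AddCommGroup M] [Module ℂ M]
    (Lop : (Fin k → ℤ) → Module.End ℂ M) (l : ℕ) (α β γ : Fin k → ℤ) :
    Module.End ℂ M :=
  ∑ i ∈ Finset.range (l + 1),
    ((-1 : ℂ) ^ i * (l.choose i)) • (Lop (α - i • γ) * Lop (β + i • γ))

section Aux

variable {k : ℕ} {M : Type*} [AddCommGroup M] [Module ℂ M]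

theorem sum_lie' {ι : Type*} (t : Finset ι) (f : ι → Module.End ℂ M) (y : Module.End ℂ M) :
    ⁅∑ i ∈ t, f i, y⁆ = ∑ i ∈ t, ⁅f i, y⁆ := by
  simp only [Ring.lie_def, Finset.sum_mul, Finset.mul_sum, Finset.sum_sub_distrib]

theorem keyLW (ε : (Fin k → ℤ) →+ ℂ)
    (Lop Wop : (Fin k → ℤ) → Module.End ℂ M)
    (hLW : ∀ a b : Fin k → ℤ, ⁅Lop a, Wop b⁆ = (ε b - ε a) • Wop (a + b))
    (a b t : Fin k → ℤ) :
    ⁅Lop a * Lop b, Wop t⁆ =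
      (ε t - ε b) • (Wop (b + t) * Lop a)
      + ((ε t - ε b) * (ε (b + t) - ε a)) • Wop (a + b + t)
      + (ε t - ε a) • (Wop (a + t) * Lop b) := by
  have hb := hLW b t
  have ha := hLW a t
  have hc := hLW a (b + t)
  rw [Ring.lie_def] at hb ha hc ⊢
  have hb' : Lop b * Wop t = Wop t * Lop b + (ε t - ε b) • Wop (b + t) := by
    rw [← hb]; abel
  have ha' : Lop a * Wop t = Wop t * Lop a + (ε t - ε a) • Wop (a + t) := by
    rw [← ha]; abel
  have hc' : Lop a * Wop (b + t) = Wop (b + t) * Lop a + (ε (b + t) - ε a) • Wop (a + (b + t)) := by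
    rw [← hc]; abel
  rw [mul_assoc, hb', mul_add, ← mul_assoc, ha', mul_smul_comm, hc']
  rw [show a + (b + t) = a + b + t from by abel]
  simp only [add_mul, smul_mul_assoc, smul_add, mul_assoc]
  module

theorem perI (ε : (Fin k → ℤ) →+ ℂ)
    (Lop Wop : (Fin k → ℤ) → Module.End ℂ M)
    (hLW : ∀ a b : Fin k → ℤ, ⁅Lop a, Wop b⁆ = (ε b - ε a) • Wop (a + b))
    (α β s γ : Fin k → ℤ) (m : ℤ) :
    ⁅Lop (α - m • γ) * Lop (β - γ + m • γ), Wop (s + γ)⁆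
      - (2 : ℂ) • ⁅Lop (α - m • γ) * Lop (β + m • γ), Wop s⁆
      + ⁅Lop (α - m • γ) * Lop (β + γ + m • γ), Wop (s - γ)⁆
      - ⁅Lop (α + γ - m • γ) * Lop (β - γ + m • γ), Wop s⁆
      + (2 : ℂ) • ⁅Lop (α + γ - m • γ) * Lop (β + m • γ), Wop (s - γ)⁆
      - ⁅Lop (α + γ - m • γ) * Lop (β + γ + m • γ), Wop (s - (2 : ℤ) • γ)⁆
    = (2 * ε γ) • (Wop (α + s - (m - 1) • γ) * Lop (β + (m - 1) • γ)
        - (2 : ℂ) • (Wop (α + s - m • γ) * Lop (β + m • γ))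
        + Wop (α + s - (m + 1) • γ) * Lop (β + (m + 1) • γ)) := by
  have key := keyLW ε Lop Wop hLW
  rw [key, key, key, key, key, key]
  rw [show β - γ + m • γ + (s + γ) = β + s + m • γ from by module,
      show α - m • γ + (β - γ + m • γ) + (s + γ) = α + β + s from by module,
      show α - m • γ + (s + γ) = α + s - (m - 1) • γ from by module,
      show β + m • γ + s = β + s + m • γ from by module,
      show α - m • γ + (β + m • γ) + s = α + β + s from by module,
      show α - m • γ + s = α + s - m • γ from by module,
      show β + γ + m • γ + (s - γ) = β + s + m • γ from by module,
      show α - m • γ + (β + γ + m • γ) + (s - γ) = α + β + s from by module,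
      show α - m • γ + (s - γ) = α + s - (m + 1) • γ from by module,
      show β - γ + m • γ + s = β + s - γ + m • γ from by module,
      show α + γ - m • γ + (β - γ + m • γ) + s = α + β + s from by module,
      show α + γ - m • γ + s = α + s - (m - 1) • γ from by module,
      show β + m • γ + (s - γ) = β + s - γ + m • γ from by module,
      show α + γ - m • γ + (β + m • γ) + (s - γ) = α + β + s from by module,
      show α + γ - m • γ + (s - γ) = α + s - m • γ from by module,
      show β + γ + m • γ + (s - (2 : ℤ) • γ) = β + s - γ + m • γ from by module,
      show α + γ - m • γ + (β + γ + m • γ) + (s - (2 : ℤ) • γ) = α + β + s from by module,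
      show α + γ - m • γ + (s - (2 : ℤ) • γ) = α + s - (m + 1) • γ from by module,
      show β - γ + m • γ = β + (m - 1) • γ from by module,
      show β + γ + m • γ = β + (m + 1) • γ from by module]
  simp only [map_add, map_sub, AddMonoidHom.map_zsmul]
  match_scalars <;> (simp only [zsmul_eq_mul]; push_cast; ring)

theorem step {V : Type*} [AddCommGroup V] [Module ℂ V] (n : ℕ) (f : ℕ → V) :
    ∑ i ∈ Finset.range (n + 2), ((-1 : ℂ) ^ i * ((n + 1).choose i)) • f i
    = ∑ i ∈ Finset.range (n + 1), ((-1 : ℂ) ^ i * (n.choose i)) • (f i - f (i + 1)) := by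
  have h0 : ∀ i : ℕ, ((-1 : ℂ) ^ (i + 1) * (((n + 1).choose (i + 1)) : ℂ)) • f (i + 1)
      = ((-1 : ℂ) ^ (i + 1) * ((n.choose (i + 1)) : ℂ)) • f (i + 1)
        - ((-1 : ℂ) ^ i * ((n.choose i) : ℂ)) • f (i + 1) := by
    intro i
    rw [Nat.choose_succ_succ]
    push_cast
    module
  rw [Finset.sum_range_succ' (fun i => ((-1 : ℂ) ^ i * (((n + 1).choose i)) : ℂ) • f i) (n + 1)]
  simp only [h0]
  rw [Finset.sum_sub_distrib]
  have h1 : ∑ i ∈ Finset.range (n + 1), ((-1 : ℂ) ^ (i + 1) * ((n.choose (i + 1)) : ℂ)) • f (i + 1)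
      + ((-1 : ℂ) ^ 0 * (((n + 1).choose 0) : ℂ)) • f 0
      = ∑ i ∈ Finset.range (n + 1), ((-1 : ℂ) ^ i * ((n.choose i) : ℂ)) • f i := by
    rw [Finset.sum_range_succ
      (fun i => ((-1 : ℂ) ^ (i + 1) * ((n.choose (i + 1)) : ℂ)) • f (i + 1)) n,
      Nat.choose_succ_self,
      Finset.sum_range_succ' (fun i => ((-1 : ℂ) ^ i * ((n.choose i) : ℂ)) • f i) n]
    simp
  rw [sub_add_eq_add_sub, h1, ← Finset.sum_sub_distrib]
  exact Finset.sum_congr rfl fun i _ => by rw [smul_sub]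

theorem step2 {V : Type*} [AddCommGroup V] [Module ℂ V] (n : ℕ) (f : ℕ → V) :
    ∑ i ∈ Finset.range (n + 3), ((-1 : ℂ) ^ i * ((n + 2).choose i)) • f i
    = ∑ i ∈ Finset.range (n + 1), ((-1 : ℂ) ^ i * (n.choose i)) •
        (f i - (2 : ℂ) • f (i + 1) + f (i + 2)) := by
  rw [show n + 3 = (n + 1) + 2 from rfl, step (n + 1) f, step n (fun i => f i - f (i + 1))]
  exact Finset.sum_congr rfl fun i _ => by module

end Aux

theorem stmt9 (k : ℕ) (ε : (Fin k → ℤ) →+ ℂ) (hε : Function.Injective ε)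
    (M : Type*) [AddCommGroup M] [Module ℂ M]
    (Lop Wop : (Fin k → ℤ) → Module.End ℂ M)
    (hLL : ∀ a b : Fin k → ℤ, ⁅Lop a, Lop b⁆ = (ε b - ε a) • Lop (a + b))
    (hLW : ∀ a b : Fin k → ℤ, ⁅Lop a, Wop b⁆ = (ε b - ε a) • Wop (a + b))
    (hWW : ∀ a b : Fin k → ℤ, ⁅Wop a, Wop b⁆ = 0)
    (l : ℕ) (α β s γ : Fin k → ℤ) (hγ : γ ≠ 0) :
    ⁅Omega Lop l α (β - γ) γ, Wop (s + γ)⁆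
      - (2 : ℂ) • ⁅Omega Lop l α β γ, Wop s⁆
      + ⁅Omega Lop l α (β + γ) γ, Wop (s - γ)⁆
      - ⁅Omega Lop l (α + γ) (β - γ) γ, Wop s⁆
      + (2 : ℂ) • ⁅Omega Lop l (α + γ) β γ, Wop (s - γ)⁆
      - ⁅Omega Lop l (α + γ) (β + γ) γ, Wop (s - (2 : ℤ) • γ)⁆
    = (2 * ε γ) • ∑ i ∈ Finset.range (l + 3),
        ((-1 : ℂ) ^ i * ((l + 2).choose i)) •
          (Wop (α + s - ((i : ℤ) - 1) • γ) * Lop (β + ((i : ℤ) - 1) • γ)) := by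
  have hsum : ∀ α' β' t : Fin k → ℤ, ⁅Omega Lop l α' β' γ, Wop t⁆
      = ∑ i ∈ Finset.range (l + 1), ((-1 : ℂ) ^ i * (l.choose i)) •
          ⁅Lop (α' - (i : ℤ) • γ) * Lop (β' + (i : ℤ) • γ), Wop t⁆ := by
    intro α' β' t
    rw [Omega, sum_lie']
    exact Finset.sum_congr rfl fun i _ => by
      rw [natCast_zsmul]; simp only [Ring.lie_def, smul_mul_assoc, mul_smul_comm, smul_sub]
  rw [hsum, hsum, hsum, hsum, hsum, hsum, Finset.smul_sum, Finset.smul_sum,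
    ← Finset.sum_sub_distrib, ← Finset.sum_add_distrib, ← Finset.sum_sub_distrib,
    ← Finset.sum_add_distrib, ← Finset.sum_sub_distrib]
  have hper : ∀ i ∈ Finset.range (l + 1),
      ((-1 : ℂ) ^ i * (l.choose i)) •
          ⁅Lop (α - (i : ℤ) • γ) * Lop (β - γ + (i : ℤ) • γ), Wop (s + γ)⁆
        - (2 : ℂ) • (((-1 : ℂ) ^ i * (l.choose i)) •
          ⁅Lop (α - (i : ℤ) • γ) * Lop (β + (i : ℤ) • γ), Wop s⁆)
        + ((-1 : ℂ) ^ i * (l.choose i)) •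
          ⁅Lop (α - (i : ℤ) • γ) * Lop (β + γ + (i : ℤ) • γ), Wop (s - γ)⁆
        - ((-1 : ℂ) ^ i * (l.choose i)) •
          ⁅Lop (α + γ - (i : ℤ) • γ) * Lop (β - γ + (i : ℤ) • γ), Wop s⁆
        + (2 : ℂ) • (((-1 : ℂ) ^ i * (l.choose i)) •
          ⁅Lop (α + γ - (i : ℤ) • γ) * Lop (β + (i : ℤ) • γ), Wop (s - γ)⁆)
        - ((-1 : ℂ) ^ i * (l.choose i)) •
          ⁅Lop (α + γ - (i : ℤ) • γ) * Lop (β + γ + (i : ℤ) • γ), Wop (s - (2 : ℤ) • γ)⁆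
      = (2 * ε γ) • (((-1 : ℂ) ^ i * (l.choose i)) •
          ((Wop (α + s - (((i : ℕ) : ℤ) - 1) • γ) * Lop (β + (((i : ℕ) : ℤ) - 1) • γ))
            - (2 : ℂ) • (Wop (α + s - ((((i + 1 : ℕ)) : ℤ) - 1) • γ)
                * Lop (β + ((((i + 1 : ℕ)) : ℤ) - 1) • γ))
            + Wop (α + s - ((((i + 2 : ℕ)) : ℤ) - 1) • γ)
                * Lop (β + ((((i + 2 : ℕ)) : ℤ) - 1) • γ))) := by
    intro i _
    rw [show (((i + 1 : ℕ)) : ℤ) - 1 = (i : ℤ) from by push_cast; ring,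
      show (((i + 2 : ℕ)) : ℤ) - 1 = (i : ℤ) + 1 from by push_cast; ring]
    rw [smul_comm ((2 : ℂ) * ε γ), ← perI ε Lop Wop hLW α β s γ (i : ℤ)]
    module
  rw [Finset.sum_congr rfl hper]
  rw [show (∑ i ∈ Finset.range (l + 1), (2 * ε γ) • (((-1 : ℂ) ^ i * (l.choose i)) •
      ((Wop (α + s - (((i : ℕ) : ℤ) - 1) • γ) * Lop (β + (((i : ℕ) : ℤ) - 1) • γ))
        - (2 : ℂ) • (Wop (α + s - ((((i + 1 : ℕ)) : ℤ) - 1) • γ)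
            * Lop (β + ((((i + 1 : ℕ)) : ℤ) - 1) • γ))
        + Wop (α + s - ((((i + 2 : ℕ)) : ℤ) - 1) • γ)
            * Lop (β + ((((i + 2 : ℕ)) : ℤ) - 1) • γ))))
    = (2 * ε γ) • ∑ i ∈ Finset.range (l + 1), ((-1 : ℂ) ^ i * (l.choose i)) •
      ((fun j : ℕ => Wop (α + s - ((j : ℤ) - 1) • γ) * Lop (β + ((j : ℤ) - 1) • γ)) i
        - (2 : ℂ) • (fun j : ℕ => Wop (α + s - ((j : ℤ) - 1) • γ)
            * Lop (β + ((j : ℤ) - 1) • γ)) (i + 1)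
        + (fun j : ℕ => Wop (α + s - ((j : ℤ) - 1) • γ) * Lop (β + ((j : ℤ) - 1) • γ)) (i + 2))
    from by rw [Finset.smul_sum]]
  rw [← step2 l (fun j : ℕ => Wop (α + s - ((j : ℤ) - 1) • γ) * Lop (β + ((j : ℤ) - 1) • γ))]
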